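/- (The B₃ Frobenius manifold.) For every t ∈ ℂ³ the product ∘_t defined from the B₃ prepotential F is commutative and associative (the WDVV equations hold), has ∂₁ as unit, and satisfies the invariance η(x ∘_t y, z) = η(x, y ∘_t z); moreover, with the Euler field E(t) = (t₁, (2/3)t₂, (1/3)t₃) and D = 4/3, the data (η, ∘_t, ∂₁, E) form a Frobenius structure in flat coordinates on ℂ³ (i.e. they also satisfy potentiality and the two Euler-field conditions with D = 4/3). -/

import Mathlib

set_option maxHeartbeats 1000000
set_option synthInstance.maxHeartbeats 400000


open scoped BigOperators Matrix

noncomputable section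

/-- The prepotential of the Frobenius manifold constructed from `B₃`:
`F = (1/2)t₁²t₃ + (1/2)t₁t₂² + (1/6)t₂³t₃ + (1/6)t₂²t₃³ + (1/210)t₃⁷`. -/
def Fpot (t : Fin 3 → ℂ) : ℂ :=
  (1 / 2) * (t 0) ^ 2 * t 2 + (1 / 2) * t 0 * (t 1) ^ 2
    + (1 / 6) * (t 1) ^ 3 * t 2 + (1 / 6) * (t 1) ^ 2 * (t 2) ^ 3
    + (1 / 210) * (t 2) ^ 7

/-- The flat metric `η` of `B₃`: `η₁₃ = η₃₁ = η₂₂ = 1`, all other entries `0`. -/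
def etaMat : Matrix (Fin 3) (Fin 3) ℂ :=
  !![0, 0, 1; 0, 1, 0; 1, 0, 0]

/-- The bilinear form associated with `η`. -/
def etaB (x y : Fin 3 → ℂ) : ℂ := ∑ i, ∑ j, etaMat i j * x i * y j

/-- The Euler field of `B₃`: `E(t) = (t₁, (2/3)t₂, (1/3)t₃)`. -/
def EulerB (t : Fin 3 → ℂ) : Fin 3 → ℂ :=
  ![t 0, (2 / 3) * t 1, (1 / 3) * t 2]

abbrev E3 := Fin 3 → ℂ

def pj (i : Fin 3) : E3 →L[ℂ] ℂ := ContinuousLinearMap.proj i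
def T2 (i j : Fin 3) : E3 →L[ℂ] E3 →L[ℂ] ℂ := (pj i).smulRight (pj j)
def T3 (i j l : Fin 3) : E3 →L[ℂ] E3 →L[ℂ] E3 →L[ℂ] ℂ := (pj i).smulRight (T2 j l)

@[simp] lemma pj_apply (i : Fin 3) (v : E3) : pj i v = v i := rfl
@[simp] lemma T2_apply (i j : Fin 3) (v w : E3) : T2 i j v w = v i * w j := by
  simp [T2, ContinuousLinearMap.smulRight_apply, smul_eq_mul]
@[simp] lemma T3_apply (i j l : Fin 3) (u v w : E3) : T3 i j l u v w = u i * (v j * w l) := by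
  simp [T3, ContinuousLinearMap.smulRight_apply]

lemma hcoord (i : Fin 3) (t : E3) : HasFDerivAt (fun s : E3 => s i) (pj i) t :=
  (ContinuousLinearMap.proj i : E3 →L[ℂ] ℂ).hasFDerivAt


lemma hpow (i : Fin 3) (n : ℕ) (t : E3) :
    HasFDerivAt (fun s : E3 => s i ^ n) ((n * t i ^ (n - 1) : ℂ) • pj i) t := by
  have h := (hasDerivAt_pow n (t i)).comp_hasFDerivAt t (hcoord i t)
  exact h

def D1 : E3 → (E3 →L[ℂ] ℂ) := fun t =>
  (t 0 * t 2 + 1 / 2 * t 1 ^ 2) • pj 0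
  + (t 0 * t 1 + 1 / 2 * t 1 ^ 2 * t 2 + 1 / 3 * (t 1 * t 2 ^ 3)) • pj 1
  + (1 / 2 * t 0 ^ 2 + 1 / 6 * t 1 ^ 3 + 1 / 2 * (t 1 ^ 2 * t 2 ^ 2) + 1 / 30 * t 2 ^ 6) • pj 2

lemma hasFDerivAt_Fpot (t : E3) : HasFDerivAt Fpot (D1 t) t := by
  have h : HasFDerivAt (fun s : E3 =>
      1 / 2 * s 0 ^ 2 * s 2 + 1 / 2 * s 0 * s 1 ^ 2 + 1 / 6 * s 1 ^ 3 * s 2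
        + 1 / 6 * s 1 ^ 2 * s 2 ^ 3 + 1 / 210 * s 2 ^ 7) _ t :=
    ((((((hpow 0 2 t).const_mul (1/2)).mul (hcoord 2 t)).add
      (((hcoord 0 t).const_mul (1/2)).mul (hpow 1 2 t))).add
      (((hpow 1 3 t).const_mul (1/6)).mul (hcoord 2 t))).add
      (((hpow 1 2 t).const_mul (1/6)).mul (hpow 2 3 t))).add
      ((hpow 2 7 t).const_mul (1/210))
  exact h.congr_fderiv (by
    ext w
    simp [D1, ContinuousLinearMap.smulRight_apply]
    ring)

def D2 : E3 → (E3 →L[ℂ] E3 →L[ℂ] ℂ) := fun t =>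
  t 2 • T2 0 0 + t 1 • T2 0 1 + t 0 • T2 0 2
  + t 1 • T2 1 0 + (t 0 + t 1 * t 2 + 1 / 3 * t 2 ^ 3) • T2 1 1
  + (1 / 2 * t 1 ^ 2 + t 1 * t 2 ^ 2) • T2 1 2
  + t 0 • T2 2 0 + (1 / 2 * t 1 ^ 2 + t 1 * t 2 ^ 2) • T2 2 1
  + (t 1 ^ 2 * t 2 + 1 / 5 * t 2 ^ 5) • T2 2 2

lemma hasFDerivAt_D1 (t : E3) : HasFDerivAt D1 (D2 t) t := by
  have g0 := (((hcoord 0 t).mul (hcoord 2 t)).add ((hpow 1 2 t).const_mul (1/2))).smul_const (pj 0)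
  have g1 := ((((hcoord 0 t).mul (hcoord 1 t)).add (((hpow 1 2 t).const_mul (1/2)).mul (hcoord 2 t))).add (((hcoord 1 t).mul (hpow 2 3 t)).const_mul (1/3))).smul_const (pj 1)
  have g2 := (((((hpow 0 2 t).const_mul (1/2)).add ((hpow 1 3 t).const_mul (1/6))).add (((hpow 1 2 t).mul (hpow 2 2 t)).const_mul (1/2))).add ((hpow 2 6 t).const_mul (1/30))).smul_const (pj 2)
  have h := (g0.add g1).add g2
  exact h.congr_fderiv (by
    refine ContinuousLinearMap.ext fun v => ContinuousLinearMap.ext fun w => ?_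
    simp [D2, ContinuousLinearMap.smulRight_apply]
    ring)


/-- Explicit third derivative trilinear form of `Fpot`. -/
def c3 (t u v w : E3) : ℂ :=
  u 0 * (v 0 * w 2 + v 1 * w 1 + v 2 * w 0)
  + u 1 * (v 0 * w 1 + v 1 * (w 0 + t 2 * w 1 + (t 1 + t 2 ^ 2) * w 2)
      + v 2 * ((t 1 + t 2 ^ 2) * w 1 + 2 * t 1 * t 2 * w 2))
  + u 2 * (v 0 * w 0 + v 1 * ((t 1 + t 2 ^ 2) * w 1 + 2 * t 1 * t 2 * w 2)
      + v 2 * (2 * t 1 * t 2 * w 1 + (t 1 ^ 2 + t 2 ^ 4) * w 2))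

lemma fderiv_D2_apply (t u v w : E3) : fderiv ℂ D2 t u v w = c3 t u v w := by
  haveI : IsBoundedSMul ℂ (E3 →L[ℂ] E3 →L[ℂ] ℂ) :=
    @NormedSpace.toIsBoundedSMul ℂ (E3 →L[ℂ] E3 →L[ℂ] ℂ) _ _ ContinuousLinearMap.toNormedSpace
  have g0 := (hcoord 2 t).smul_const (T2 0 0)
  have g1 := (hcoord 1 t).smul_const (T2 0 1)
  have g2 := (hcoord 0 t).smul_const (T2 0 2)
  have g3 := (hcoord 1 t).smul_const (T2 1 0)
  have g4 := ((((hcoord 0 t).add ((hcoord 1 t).mul (hcoord 2 t))).add ((hpow 2 3 t).const_mul (1/3)))).smul_const (T2 1 1)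
  have g5 := ((((hpow 1 2 t).const_mul (1/2)).add ((hcoord 1 t).mul (hpow 2 2 t)))).smul_const (T2 1 2)
  have g6 := (hcoord 0 t).smul_const (T2 2 0)
  have g7 := ((((hpow 1 2 t).const_mul (1/2)).add ((hcoord 1 t).mul (hpow 2 2 t)))).smul_const (T2 2 1)
  have g8 := ((((hpow 1 2 t).mul (hcoord 2 t)).add ((hpow 2 5 t).const_mul (1/5)))).smul_const (T2 2 2)
  have h := (((((((g0.add g1).add g2).add g3).add g4).add g5).add g6).add g7).add g8
  have h2 : HasFDerivAt D2 _ t := h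
  rw [h2.fderiv]
  simp [c3, ContinuousLinearMap.smulRight_apply]
  ring

lemma fderiv_Fpot : fderiv ℂ Fpot = D1 := funext fun t => (hasFDerivAt_Fpot t).fderiv
lemma fderiv_D1 : fderiv ℂ D1 = D2 := funext fun t => (hasFDerivAt_D1 t).fderiv

/-- The third partial derivative `∂_i ∂_j ∂_l F` at `t`. -/
def d3F (t : Fin 3 → ℂ) (i j l : Fin 3) : ℂ :=
  iteratedFDeriv ℂ 3 Fpot t ![Pi.single i 1, Pi.single j 1, Pi.single l 1]

lemma d3F_eq_c3 (t : E3) (i j l : Fin 3) :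
    d3F t i j l = c3 t (Pi.single i 1) (Pi.single j 1) (Pi.single l 1) := by
  unfold d3F
  rw [iteratedFDeriv_succ_apply_right, iteratedFDeriv_two_apply,
    fderiv_Fpot, fderiv_D1]
  rw [show (Fin.init ![Pi.single i (1:ℂ), Pi.single j 1, Pi.single l 1] : Fin 2 → E3)
      = ![Pi.single i 1, Pi.single j 1] from by
    funext k; fin_cases k <;> rfl]
  have e2 : (![(Pi.single i 1 : E3), Pi.single j 1, Pi.single l 1] (Fin.last 2)) = Pi.single l 1 := by
    show Matrix.vecCons _ _ (2 : Fin 3) = _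
    simp
  rw [e2]
  simpa using fderiv_D2_apply t (Pi.single i 1) (Pi.single j 1) (Pi.single l 1)

lemma etaMat_inv : etaMat⁻¹ = etaMat := by
  have h : etaMat * etaMat = 1 := by
    ext i j
    fin_cases i <;> fin_cases j <;>
      simp [etaMat, Matrix.mul_apply, Fin.sum_univ_three, Matrix.one_apply, Matrix.vecHead, Matrix.vecTail]
  rw [Matrix.inv_eq_right_inv h]

/-- The product `∘_t` of the `B₃` Frobenius manifold:
`∂_i ∘_t ∂_j = Σ_k (Σ_l η^{kl} ∂_i∂_j∂_l F(t)) ∂_k`, extended bilinearly. -/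
def mulB (t : Fin 3 → ℂ) (x y : Fin 3 → ℂ) : Fin 3 → ℂ :=
  fun k => ∑ i, ∑ j, ∑ l, x i * y j * (etaMat⁻¹ k l) * d3F t i j l

def mulE (t x y : E3) : E3 :=
  ![x 0 * y 0 + (t 1 + t 2 ^ 2) * (x 1 * y 1) + 2 * t 1 * t 2 * (x 1 * y 2 + x 2 * y 1)
      + (t 1 ^ 2 + t 2 ^ 4) * (x 2 * y 2),
    x 0 * y 1 + x 1 * y 0 + t 2 * (x 1 * y 1) + (t 1 + t 2 ^ 2) * (x 1 * y 2 + x 2 * y 1)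
      + 2 * t 1 * t 2 * (x 2 * y 2),
    x 0 * y 2 + x 2 * y 0 + x 1 * y 1]

lemma mulB_eq (t x y : E3) : mulB t x y = mulE t x y := by
  funext k
  unfold mulB
  simp only [etaMat_inv, d3F_eq_c3, Fin.sum_univ_three]
  fin_cases k <;>
    (simp [etaMat, mulE, c3, Pi.single_apply, Matrix.vecHead, Matrix.vecTail]; ring)

def Ecl : E3 →L[ℂ] E3 :=
  ContinuousLinearMap.pi ![pj 0, (2 / 3 : ℂ) • pj 1, (1 / 3 : ℂ) • pj 2]

lemma EulerB_eq : EulerB = ⇑Ecl := by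
  funext t k
  fin_cases k <;> simp [EulerB, Ecl]

lemma fderiv_EulerB (t : E3) : fderiv ℂ EulerB t = Ecl := by
  rw [EulerB_eq]; exact Ecl.fderiv

def dm0 (t x y : E3) : E3 →L[ℂ] ℂ :=
  (x 1 * y 1 + 2 * t 2 * (x 1 * y 2 + x 2 * y 1) + 2 * t 1 * (x 2 * y 2)) • pj 1
  + (2 * t 2 * (x 1 * y 1) + 2 * t 1 * (x 1 * y 2 + x 2 * y 1) + 4 * t 2 ^ 3 * (x 2 * y 2)) • pj 2

def dm1 (t x y : E3) : E3 →L[ℂ] ℂ :=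
  (x 1 * y 2 + x 2 * y 1 + 2 * t 2 * (x 2 * y 2)) • pj 1
  + (x 1 * y 1 + 2 * t 2 * (x 1 * y 2 + x 2 * y 1) + 2 * t 1 * (x 2 * y 2)) • pj 2

lemma hm0 (t x y : E3) : HasFDerivAt (fun s : E3 =>
    x 0 * y 0 + (s 1 + s 2 ^ 2) * (x 1 * y 1) + 2 * s 1 * s 2 * (x 1 * y 2 + x 2 * y 1)
      + (s 1 ^ 2 + s 2 ^ 4) * (x 2 * y 2)) (dm0 t x y) t := by
  have h := (((hasFDerivAt_const (x 0 * y 0) t).add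
      (((hcoord 1 t).add (hpow 2 2 t)).mul_const (x 1 * y 1))).add
      ((((hcoord 1 t).const_mul 2).mul (hcoord 2 t)).mul_const (x 1 * y 2 + x 2 * y 1))).add
      (((hpow 1 2 t).add (hpow 2 4 t)).mul_const (x 2 * y 2))
  exact h.congr_fderiv (by ext w; simp [dm0]; ring)

lemma hm1 (t x y : E3) : HasFDerivAt (fun s : E3 =>
    x 0 * y 1 + x 1 * y 0 + s 2 * (x 1 * y 1) + (s 1 + s 2 ^ 2) * (x 1 * y 2 + x 2 * y 1)
      + 2 * s 1 * s 2 * (x 2 * y 2)) (dm1 t x y) t := by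
  have h := ((((hasFDerivAt_const (x 0 * y 1) t).add (hasFDerivAt_const (x 1 * y 0) t)).add
      ((hcoord 2 t).mul_const (x 1 * y 1))).add
      (((hcoord 1 t).add (hpow 2 2 t)).mul_const (x 1 * y 2 + x 2 * y 1))).add
      ((((hcoord 1 t).const_mul 2).mul (hcoord 2 t)).mul_const (x 2 * y 2))
  exact h.congr_fderiv (by ext w; simp [dm1]; ring)

lemma hm2 (t x y : E3) : HasFDerivAt (fun _ : E3 =>
    x 0 * y 2 + x 2 * y 0 + x 1 * y 1) (0 : E3 →L[ℂ] ℂ) t :=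
  hasFDerivAt_const _ t

def dMul (t x y : E3) : E3 →L[ℂ] E3 :=
  ContinuousLinearMap.pi ![dm0 t x y, dm1 t x y, 0]

lemma hasFDerivAt_mulE (t x y : E3) :
    HasFDerivAt (fun s => mulE s x y) (dMul t x y) t := by
  have hfun : (fun s => mulE s x y) = (fun s (i : Fin 3) =>
      (![(fun s : E3 => x 0 * y 0 + (s 1 + s 2 ^ 2) * (x 1 * y 1)
            + 2 * s 1 * s 2 * (x 1 * y 2 + x 2 * y 1) + (s 1 ^ 2 + s 2 ^ 4) * (x 2 * y 2)),
         (fun s : E3 => x 0 * y 1 + x 1 * y 0 + s 2 * (x 1 * y 1)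
            + (s 1 + s 2 ^ 2) * (x 1 * y 2 + x 2 * y 1) + 2 * s 1 * s 2 * (x 2 * y 2)),
         (fun _ : E3 => x 0 * y 2 + x 2 * y 0 + x 1 * y 1)] : Fin 3 → E3 → ℂ) i s) := by
    funext s i
    fin_cases i <;> simp [mulE]
  rw [hfun]
  refine hasFDerivAt_pi.mpr ?_
  intro i
  fin_cases i
  · exact hm0 t x y
  · exact hm1 t x y
  · exact hm2 t x y

lemma fderiv_mulB (t x y : E3) :
    fderiv ℂ (fun s => mulB s x y) t = dMul t x y := by
  simp only [mulB_eq]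
  exact (hasFDerivAt_mulE t x y).fderiv

lemma pot_fderiv (t x y z : E3) :
    fderiv ℂ (fun s => etaB (mulB s x y) z) t = z 2 • dm0 t x y + z 1 • dm1 t x y := by
  have hfun : (fun s => etaB (mulB s x y) z) = (fun s : E3 =>
      (x 0 * y 0 + (s 1 + s 2 ^ 2) * (x 1 * y 1) + 2 * s 1 * s 2 * (x 1 * y 2 + x 2 * y 1)
        + (s 1 ^ 2 + s 2 ^ 4) * (x 2 * y 2)) * z 2
      + (x 0 * y 1 + x 1 * y 0 + s 2 * (x 1 * y 1) + (s 1 + s 2 ^ 2) * (x 1 * y 2 + x 2 * y 1)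
        + 2 * s 1 * s 2 * (x 2 * y 2)) * z 1
      + (x 0 * y 2 + x 2 * y 0 + x 1 * y 1) * z 0) := by
    funext s
    simp [mulB_eq, etaB, etaMat, Fin.sum_univ_three, mulE, Matrix.vecHead, Matrix.vecTail]
  have h := (((hm0 t x y).mul_const (z 2)).add ((hm1 t x y).mul_const (z 1))).add
    ((hm2 t x y).mul_const (z 0))
  rw [hfun]; refine h.fderiv.trans ?_
  ext w
  simp

lemma Ecl_apply (v : E3) : Ecl v = ![v 0, (2 / 3) * v 1, (1 / 3) * v 2] := by
  funext k; fin_cases k <;> simp [Ecl]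

lemma dMul_apply (t x y w : E3) :
    dMul t x y w = ![dm0 t x y w, dm1 t x y w, 0] := by
  funext k; fin_cases k <;> simp [dMul]

/-- The `B₃` Frobenius manifold: the product `∘_t` is commutative and
associative (the WDVV equations hold), has `∂₁` as unit, satisfies the
invariance `η(x ∘_t y, z) = η(x, y ∘_t z)`; and, together with the Euler field
`E(t) = (t₁, (2/3)t₂, (1/3)t₃)` and `D = 4/3`, the data form a Frobenius
structure in flat coordinates on `ℂ³` (holomorphy, potentiality and the two
Euler-field conditions). -/
theorem b3_frobenius :
    (∀ t x y, mulB t x y = mulB t y x) ∧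
    (∀ t x y z, mulB t (mulB t x y) z = mulB t x (mulB t y z)) ∧
    (∀ t x, mulB t (Pi.single 0 1) x = x) ∧
    (∀ t x y z, etaB (mulB t x y) z = etaB x (mulB t y z)) ∧
    (∀ x y, Differentiable ℂ fun t => mulB t x y) ∧
    (∀ t w x y z : Fin 3 → ℂ,
      fderiv ℂ (fun s => etaB (mulB s x y) z) t w
        = fderiv ℂ (fun s => etaB (mulB s w y) z) t x) ∧
    Differentiable ℂ EulerB ∧
    (∀ t x y, etaB (fderiv ℂ EulerB t x) y + etaB x (fderiv ℂ EulerB t y)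
        = (4 / 3 : ℂ) * etaB x y) ∧
    (∀ t x y, fderiv ℂ (fun s => mulB s x y) t (EulerB t)
        - fderiv ℂ EulerB t (mulB t x y)
        + mulB t (fderiv ℂ EulerB t x) y + mulB t x (fderiv ℂ EulerB t y)
      = mulB t x y) := by
  refine ⟨?_, ?_, ?_, ?_, ?_, ?_, ?_, ?_, ?_⟩
  · intro t x y; simp only [mulB_eq]; funext k; fin_cases k <;> (simp [mulE]; ring)
  · intro t x y z; simp only [mulB_eq]; funext k; fin_cases k <;> (simp [mulE]; ring)
  · intro t x; simp only [mulB_eq]; funext k; fin_cases k <;>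
      (simp [mulE, Pi.single_apply]; try ring)
  · intro t x y z; simp only [mulB_eq];
      simp [etaB, etaMat, Fin.sum_univ_three, mulE, Matrix.vecHead, Matrix.vecTail]; ring
  · intro x y; simp only [mulB_eq]; exact fun t => (hasFDerivAt_mulE t x y).differentiableAt
  · intro t w x y z; rw [pot_fderiv, pot_fderiv]; simp [dm0, dm1]; ring
  · rw [EulerB_eq]; exact Ecl.differentiable
  · intro t x y; rw [fderiv_EulerB]
    simp [etaB, etaMat, Fin.sum_univ_three, Ecl_apply, Matrix.vecHead, Matrix.vecTail]; ring
  · intro t x y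
    rw [fderiv_mulB, fderiv_EulerB]
    simp only [mulB_eq]
    funext k
    fin_cases k <;>
      (simp [dMul_apply, dm0, dm1, mulE, Ecl_apply, EulerB, Pi.sub_apply, Pi.add_apply,
        Matrix.vecHead, Matrix.vecTail]; ring)
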